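/- The poset of ≤₂-equivalence classes of functions is distributive in the following sense: if f : X → Y and g_i : X_i → Y_i (i ∈ I, a set) are functions with f ≤₂ ⌈g_i⌉_{i∈I}, then there exist functions f_i (restrictions of f to clopen subsets O_i of X forming a partition of X) such that f_i ≤₂ g_i for all i ∈ I and f ≡₂ ⌈f_i⌉_{i∈I}. -/

import Mathlib

def Red2 {X₁ Y₁ X₂ Y₂ : Type*}
    [TopologicalSpace X₁] [TopologicalSpace Y₁] [TopologicalSpace X₂] [TopologicalSpace Y₂]
    (f : X₁ → Y₁) (g : X₂ → Y₂) : Prop :=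
  ∃ (A : Set (X₁ × Y₂)) (F : A → Y₁) (G : X₁ → X₂),
    Continuous F ∧ Continuous G ∧
      ∀ x : X₁, ∃ h : (x, g (G x)) ∈ A, f x = F ⟨(x, g (G x)), h⟩

def coprodMap {I : Type*} {X Y : I → Type*} (f : ∀ i, X i → Y i) :
    (Σ i, X i) → Σ i, Y i :=
  fun p => ⟨p.1, f p.1 p.2⟩

/-- Distributivity of `≤₂`: if `f ≤₂ ⌈g_i⌉`, then `X` partitions into clopen sets
`O_i` such that the restrictions `f_i = f|_{O_i}` satisfy `f_i ≤₂ g_i` and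
`f ≡₂ ⌈f_i⌉`. -/
theorem stmt9 {X Y : Type*} [TopologicalSpace X] [TopologicalSpace Y]
    {I : Type*} {U V : I → Type*}
    [∀ i, TopologicalSpace (U i)] [∀ i, TopologicalSpace (V i)]
    (f : X → Y) (g : ∀ i, U i → V i)
    (h : Red2 f (coprodMap g)) :
    ∃ O : I → Set X,
      (∀ i, IsClopen (O i)) ∧
      (∀ i j, i ≠ j → Disjoint (O i) (O j)) ∧
      (⋃ i, O i) = Set.univ ∧
      (∀ i, Red2 (fun x : O i => f x.1) (g i)) ∧
      Red2 f (coprodMap fun i => fun x : O i => f x.1) ∧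
      Red2 (coprodMap fun i => fun x : O i => f x.1) f := by
  obtain ⟨A, F, G, hF, hG, hfFG⟩ := h
  have hclopen : ∀ i, IsClopen {x : X | (G x).1 = i} := by
    intro i
    show IsClopen (G ⁻¹' (Sigma.fst ⁻¹' {i}))
    rw [← Set.range_sigmaMk]
    exact isClopen_range_sigmaMk.preimage hG
  refine ⟨fun i => {x | (G x).1 = i}, hclopen, ?_, ?_, ?_, ?_, ?_⟩
  · intro i j hij
    rw [Set.disjoint_left]
    rintro x (hi : (G x).1 = i) (hj : (G x).1 = j)
    exact hij (hi ▸ hj)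
  · ext x; simp only [Set.mem_iUnion, Set.mem_univ, iff_true]
    exact ⟨(G x).1, rfl⟩
  · intro i
    set O : Set X := {x | (G x).1 = i} with hO
    have hemb : Topology.IsEmbedding (Sigma.mk i : U i → Σ j, U j) := Topology.IsEmbedding.sigmaMk
    let e : U i ≃ₜ Set.range (Sigma.mk i : U i → Σ j, U j) :=
      hemb.toHomeomorph
    have hmem : ∀ x : O, G x.1 ∈ Set.range (Sigma.mk i : U i → Σ j, U j) := by
      rintro ⟨x, hx⟩
      rw [Set.range_sigmaMk]
      exact hx
    let Gi : O → U i := fun x => e.symm ⟨G x.1, hmem x⟩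
    have hGi : Continuous Gi := by
      apply e.symm.continuous.comp
      exact Continuous.subtype_mk (hG.comp continuous_subtype_val) _
    have hGx : ∀ x : O, G x.1 = ⟨i, Gi x⟩ := by
      intro x
      have := e.apply_symm_apply ⟨G x.1, hmem x⟩
      have h2 : (e (e.symm ⟨G x.1, hmem x⟩) : Σ j, U j) = G x.1 := by rw [this]
      exact h2.symm
    refine ⟨{p : O × V i | ((p.1 : X), (⟨i, p.2⟩ : Σ j, V j)) ∈ A},
      fun q => F ⟨(q.1.1.1, ⟨i, q.1.2⟩), q.2⟩, Gi, ?_, hGi, ?_⟩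
    · apply hF.comp
      apply Continuous.subtype_mk
      exact ((continuous_subtype_val.comp (continuous_fst.comp continuous_subtype_val)).prodMk
        (continuous_sigmaMk.comp (continuous_snd.comp continuous_subtype_val)))
    · intro x
      obtain ⟨hmemA, hval⟩ := hfFG x.1
      have hc : coprodMap g (G x.1) = ⟨i, g i (Gi x)⟩ := by rw [hGx x]; rfl
      have hmemA' : ((x : X), (⟨i, g i (Gi x)⟩ : Σ j, V j)) ∈ A := hc ▸ hmemA
      refine ⟨hmemA', hval.trans (congrArg F (Subtype.ext ?_))⟩
      exact Prod.ext rfl hc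
  · -- f ≤₂ coprod of restrictions
    refine ⟨Set.univ, fun q => q.1.2.2, fun x => ⟨(G x).1, ⟨x, rfl⟩⟩, ?_, ?_, ?_⟩
    · have : Continuous fun p : Σ _ : I, Y => p.2 :=
        continuous_sigma fun i => continuous_id
      exact this.comp (continuous_snd.comp continuous_subtype_val)
    · rw [continuous_iff_continuousAt]
      intro x
      obtain ⟨j, hj⟩ : ∃ j, (G x).1 = j := ⟨_, rfl⟩
      have hx : x ∈ {y : X | (G y).1 = j} := hj
      refine ContinuousOn.continuousAt ?_ ((hclopen j).isOpen.mem_nhds hx)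
      rw [continuousOn_iff_continuous_restrict]
      have heq : ({y : X | (G y).1 = j}.domRestrict
          (fun x : X => (⟨(G x).1, ⟨x, rfl⟩⟩ : Σ k, {x : X | (G x).1 = k})))
          = fun y => ⟨j, ⟨y.1, y.2⟩⟩ := by
        funext y
        obtain ⟨y, hy⟩ := y
        simp only [Set.domRestrict_apply]
        subst hy
        rfl
      rw [heq]
      exact continuous_sigmaMk.comp (continuous_subtype_val.subtype_mk _)
    · intro x
      exact ⟨Set.mem_univ _, rfl⟩
  · -- coprod of restrictions ≤₂ f
    refine ⟨Set.univ, fun q => ⟨q.1.1.1, q.1.2⟩, fun p => p.2.1, ?_, ?_, ?_⟩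
    · have h1 : Continuous fun q : Σ j, ({x : X | (G x).1 = j} × Y) => (⟨q.1, q.2.2⟩ : Σ _ : I, Y) :=
        continuous_sigma fun j => continuous_sigmaMk.comp continuous_snd
      have hm : Continuous fun p : (Σ j, {x : X | (G x).1 = j}) × Y =>
          (⟨p.1.1, p.2⟩ : Σ _ : I, Y) := by
        have h2 := h1.comp
          (Homeomorph.sigmaProdDistrib (X := fun j => ({x : X | (G x).1 = j} : Type _))
            (Y := Y)).continuous
        exact h2
      exact hm.comp continuous_subtype_val
    · exact continuous_sigma fun i => continuous_subtype_val
    · rintro ⟨j, x⟩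
      exact ⟨Set.mem_univ _, rfl⟩
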